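/- (Carleson embedding theorem, dyadic form.) Let 𝒬 be the tree of partition sets of a filtered σ-finite measure space, and let (a_Q)_{Q∈𝒬} be nonnegative numbers satisfying Σ_{Q ⊆ P} a_Q ≤ μ(P) for every P ∈ 𝒬. Then for every f ∈ L^2(μ), Σ_{Q∈𝒬} a_Q ⟨|f|⟩_Q^2 ≤ 4 ‖f‖_{L^2(μ)}^2. -/

import Mathlib

open MeasureTheory

/-- A filtered structure on a measure space: for each `n ∈ ℤ`, a countable partition
`part n` of `Ω` into measurable sets of finite positive measure, with `part (n+1)`
refining `part n`. -/
structure MartingaleGrid (Ω : Type*) [MeasurableSpace Ω] (μ : Measure Ω) where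
  part : ℤ → Set (Set Ω)
  countable : ∀ n, (part n).Countable
  measurableSet : ∀ n, ∀ Q ∈ part n, MeasurableSet Q
  pos : ∀ n, ∀ Q ∈ part n, 0 < μ Q
  fin : ∀ n, ∀ Q ∈ part n, μ Q < ⊤
  disjoint : ∀ n, (part n).PairwiseDisjoint id
  cover : ∀ n, ⋃₀ part n = Set.univ
  refines : ∀ n, ∀ Q ∈ part (n + 1), ∃ P ∈ part n, Q ⊆ P

variable {Ω : Type*} [MeasurableSpace Ω] {μ : MeasureTheory.Measure Ω}

/-- The tree `𝒬 = ⋃ₙ 𝒬ₙ` of all partition sets. -/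
def MartingaleGrid.tree (G : MartingaleGrid Ω μ) : Set (Set Ω) :=
  ⋃ n : ℤ, G.part n

/-- The children of `P`: the maximal elements of the tree strictly contained in `P`. -/
def MartingaleGrid.children (G : MartingaleGrid Ω μ) (P : Set Ω) : Set (Set Ω) :=
  {Q | Q ∈ G.tree ∧ Q ⊂ P ∧ ∀ R ∈ G.tree, Q ⊆ R → R ⊂ P → R = Q}

/-- The martingale difference `Δ_P f = Σ_{Q child of P} 1_Q (⟨f⟩_Q − ⟨f⟩_P)`. -/
noncomputable def MartingaleGrid.mdiff (G : MartingaleGrid Ω μ) (P : Set Ω)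
    (f : Ω → ℝ) (x : Ω) : ℝ :=
  ∑' Q : G.children P,
    Set.indicator (Q : Set Ω)
      (fun _ => (⨍ y in (Q : Set Ω), f y ∂μ) - ⨍ y in P, f y ∂μ) x


section CarlesonAuxSection
open Set

namespace MartingaleGrid

variable (G : MartingaleGrid Ω μ)

lemma nonempty_of_mem {n : ℤ} {Q : Set Ω} (hQ : Q ∈ G.part n) : Q.Nonempty := by
  rcases Set.eq_empty_or_nonempty Q with h | h
  · exact absurd (G.pos n Q hQ) (by simp [h])
  · exact h

lemma mem_tree {n : ℤ} {Q : Set Ω} (hQ : Q ∈ G.part n) : Q ∈ G.tree :=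
  Set.mem_iUnion.2 ⟨n, hQ⟩

lemma tree_countable : G.tree.Countable :=
  Set.countable_iUnion G.countable

lemma exists_anc' (n : ℤ) : ∀ m : ℤ, n ≤ m →
    ∀ Q ∈ G.part m, ∃ P ∈ G.part n, Q ⊆ P := by
  refine Int.le_induction (fun Q hQ => ⟨Q, hQ, subset_rfl⟩) ?_
  intro k _ ih Q hQ
  obtain ⟨R, hR, hQR⟩ := G.refines k Q hQ
  obtain ⟨P, hP, hRP⟩ := ih R hR
  exact ⟨P, hP, hQR.trans hRP⟩

lemma exists_anc {n m : ℤ} (h : n ≤ m) {Q : Set Ω} (hQ : Q ∈ G.part m) :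
    ∃ P ∈ G.part n, Q ⊆ P := G.exists_anc' n m h Q hQ

lemma unique_anc {n : ℤ} {Q P₁ P₂ : Set Ω} (hQ : Q.Nonempty) (h₁ : P₁ ∈ G.part n)
    (h₂ : P₂ ∈ G.part n) (s₁ : Q ⊆ P₁) (s₂ : Q ⊆ P₂) : P₁ = P₂ := by
  by_contra hne
  have := G.disjoint n h₁ h₂ hne
  obtain ⟨x, hx⟩ := hQ
  exact Set.disjoint_left.1 this (s₁ hx) (s₂ hx)

lemma subset_or_disjoint {n m : ℤ} (h : n ≤ m) {Q R : Set Ω} (hQ : Q ∈ G.part m)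
    (hR : R ∈ G.part n) : Q ⊆ R ∨ Disjoint Q R := by
  obtain ⟨P, hP, hQP⟩ := G.exists_anc h hQ
  by_cases hPR : P = R
  · exact Or.inl (hPR ▸ hQP)
  · exact Or.inr ((G.disjoint n hP hR hPR).mono_left hQP)

lemma tree_nested {Q R : Set Ω} (hQ : Q ∈ G.tree) (hR : R ∈ G.tree)
    (hne : (Q ∩ R).Nonempty) : Q ⊆ R ∨ R ⊆ Q := by
  obtain ⟨m, hQm⟩ := Set.mem_iUnion.1 hQ
  obtain ⟨n, hRn⟩ := Set.mem_iUnion.1 hR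
  have hd : ¬ Disjoint Q R := by
    rw [Set.not_disjoint_iff_nonempty_inter]; exact hne
  rcases le_total n m with h | h
  · rcases G.subset_or_disjoint h hQm hRn with h' | h'
    · exact Or.inl h'
    · exact absurd h' hd
  · rcases G.subset_or_disjoint h hRn hQm with h' | h'
    · exact Or.inr h'
    · exact absurd h'.symm hd

end MartingaleGrid

open scoped ENNReal
namespace MartingaleGrid

variable {Ω : Type*} [MeasurableSpace Ω] {μ : MeasureTheory.Measure Ω}
variable (G : MartingaleGrid Ω μ) (F : Ω → ℝ≥0∞)


noncomputable def avg (μ : Measure Ω) (F : Ω → ℝ≥0∞) (Q : Set Ω) : ℝ≥0∞ :=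
  (∫⁻ y in Q, F y ∂μ) / μ Q

def TN (N : ℕ) : Set (Set Ω) := {Q | ∃ n : ℤ, -(N : ℤ) ≤ n ∧ Q ∈ G.part n}

def SS (N : ℕ) (τ : ℝ≥0∞) : Set (Set Ω) := {Q ∈ G.TN N | τ < avg μ F Q}

def MM (N : ℕ) (τ : ℝ≥0∞) : Set (Set Ω) :=
  {P ∈ G.SS F N τ | ∀ R ∈ G.SS F N τ, P ⊆ R → R = P}

noncomputable def MaxN (N : ℕ) (x : Ω) : ℝ≥0∞ :=
  ⨆ Q : G.TN N, Set.indicator (Q : Set Ω) (fun _ => avg μ F Q) x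

variable {G F}

lemma TN_subset_tree {N : ℕ} : G.TN N ⊆ G.tree := by
  rintro Q ⟨n, _, hQ⟩; exact G.mem_tree hQ

lemma SS_subset_tree {N : ℕ} {τ : ℝ≥0∞} : G.SS F N τ ⊆ G.tree :=
  fun _ h => TN_subset_tree h.1

lemma MM_subset_SS {N : ℕ} {τ : ℝ≥0∞} : G.MM F N τ ⊆ G.SS F N τ := fun _ h => h.1

lemma meas_of_mem_tree {Q : Set Ω} (h : Q ∈ G.tree) : MeasurableSet Q := by
  obtain ⟨n, hn⟩ := Set.mem_iUnion.1 h; exact G.measurableSet n Q hn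

lemma nonempty_of_mem_tree {Q : Set Ω} (h : Q ∈ G.tree) : Q.Nonempty := by
  obtain ⟨n, hn⟩ := Set.mem_iUnion.1 h; exact G.nonempty_of_mem hn

lemma pos_of_mem_tree {Q : Set Ω} (h : Q ∈ G.tree) : 0 < μ Q := by
  obtain ⟨n, hn⟩ := Set.mem_iUnion.1 h; exact G.pos n Q hn

lemma fin_of_mem_tree {Q : Set Ω} (h : Q ∈ G.tree) : μ Q < ⊤ := by
  obtain ⟨n, hn⟩ := Set.mem_iUnion.1 h; exact G.fin n Q hn

lemma exists_max {N : ℕ} {τ : ℝ≥0∞} {Q : Set Ω} (hQ : Q ∈ G.SS F N τ) :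
    ∃ P ∈ G.MM F N τ, Q ⊆ P := by
  classical
  obtain ⟨⟨n, hn, hQn⟩, hτQ⟩ := hQ
  have hQne : Q.Nonempty := G.nonempty_of_mem hQn
  set A : Finset ℤ :=
    (Finset.Icc (-(N : ℤ)) n).filter
      (fun m => ∃ P ∈ G.part m, Q ⊆ P ∧ τ < avg μ F P) with hA
  have hnA : n ∈ A := by
    simp only [hA, Finset.mem_filter, Finset.mem_Icc]
    exact ⟨⟨hn, le_rfl⟩, Q, hQn, subset_rfl, hτQ⟩
  have hAne : A.Nonempty := ⟨n, hnA⟩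
  set m := A.min' hAne with hm
  have hmA : m ∈ A := A.min'_mem hAne
  simp only [hA, Finset.mem_filter, Finset.mem_Icc] at hmA
  obtain ⟨⟨hmN, hmn⟩, P, hPm, hQP, hτP⟩ := hmA
  have hPS : P ∈ G.SS F N τ := ⟨⟨m, hmN, hPm⟩, hτP⟩
  refine ⟨P, ⟨hPS, ?_⟩, hQP⟩
  rintro R ⟨⟨k, hkN, hRk⟩, hτR⟩ hPR
  have hQR : Q ⊆ R := hQP.trans hPR
  rcases le_total k n with hkn | hnk
  · -- R is an ancestor of Q at level k ≤ n, so k ∈ A and m ≤ k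
    have hkA : k ∈ A := by
      simp only [hA, Finset.mem_filter, Finset.mem_Icc]
      exact ⟨⟨hkN, hkn⟩, R, hRk, hQR, hτR⟩
    have hmk : m ≤ k := A.min'_le k hkA
    rcases G.subset_or_disjoint hmk hRk hPm with hsub | hdis
    · exact subset_antisymm hsub hPR
    · obtain ⟨x, hx⟩ := hQne
      exact (Set.disjoint_left.1 hdis (hQR hx) (hQP hx)).elim
  · rcases G.subset_or_disjoint hnk hRk hQn with hsub | hdis
    · exact subset_antisymm (hsub.trans hQP) hPR
    · obtain ⟨x, hx⟩ := hQne
      exact (Set.disjoint_left.1 hdis (hQR hx) hx).elim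

lemma MM_pairwiseDisjoint {N : ℕ} {τ : ℝ≥0∞} : (G.MM F N τ).PairwiseDisjoint id := by
  intro P₁ h₁ P₂ h₂ hne
  rw [Function.onFun, Set.disjoint_iff_inter_eq_empty]
  by_contra hint
  have hnz : (P₁ ∩ P₂).Nonempty := Set.nonempty_iff_ne_empty.2 hint
  rcases G.tree_nested (SS_subset_tree h₁.1) (SS_subset_tree h₂.1) hnz with hs | hs
  · exact hne (h₁.2 P₂ h₂.1 hs).symm
  · exact hne (h₂.2 P₁ h₁.1 hs)

lemma sUnion_SS_eq {N : ℕ} {τ : ℝ≥0∞} : ⋃₀ G.SS F N τ = ⋃₀ G.MM F N τ := by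
  apply subset_antisymm
  · rintro x ⟨Q, hQ, hx⟩
    obtain ⟨P, hP, hQP⟩ := exists_max hQ
    exact ⟨P, hP, hQP hx⟩
  · exact Set.sUnion_subset_sUnion MM_subset_SS

lemma measure_sUnion_MM {N : ℕ} {τ : ℝ≥0∞} (ν : Measure Ω)
    (hν : ∀ P ∈ G.MM F N τ, MeasurableSet P) :
    ν (⋃₀ G.MM F N τ) = ∑' P : G.MM F N τ, ν P :=
  measure_sUnion ((G.tree_countable.mono (MM_subset_SS.trans SS_subset_tree)))
    (MM_pairwiseDisjoint) hν

lemma sUnion_SS_measurable {N : ℕ} {τ : ℝ≥0∞} : MeasurableSet (⋃₀ G.SS F N τ) :=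
  MeasurableSet.sUnion (G.tree_countable.mono SS_subset_tree)
    (fun _ h => meas_of_mem_tree (SS_subset_tree h))

/-- Weak type inequality over the union of big-average cubes. -/
lemma weak_ineq {N : ℕ} {τ : ℝ≥0∞} :
    τ * μ (⋃₀ G.SS F N τ) ≤ ∫⁻ x in ⋃₀ G.SS F N τ, F x ∂μ := by
  have hmeasMM : ∀ P ∈ G.MM F N τ, MeasurableSet P :=
    fun P hP => meas_of_mem_tree (SS_subset_tree (MM_subset_SS hP))
  have key : ∀ P ∈ G.MM F N τ, τ * μ P ≤ ∫⁻ x in P, F x ∂μ := by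
    intro P hP
    have hτP : τ < avg μ F P := hP.1.2
    have h0 : μ P ≠ 0 := (pos_of_mem_tree (SS_subset_tree hP.1)).ne'
    have ht : μ P ≠ ⊤ := (fin_of_mem_tree (SS_subset_tree hP.1)).ne
    calc τ * μ P ≤ avg μ F P * μ P := mul_le_mul_left hτP.le _
    _ = ∫⁻ x in P, F x ∂μ := ENNReal.div_mul_cancel h0 ht
  set ν : Measure Ω := μ.withDensity F with hν
  have hνP : ∀ P ∈ G.MM F N τ, ν P = ∫⁻ x in P, F x ∂μ :=
    fun P hP => withDensity_apply F (hmeasMM P hP)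
  calc τ * μ (⋃₀ G.SS F N τ) = τ * μ (⋃₀ G.MM F N τ) := by rw [sUnion_SS_eq]
  _ = τ * ∑' P : G.MM F N τ, μ P := by rw [measure_sUnion_MM μ hmeasMM]
  _ = ∑' P : G.MM F N τ, τ * μ P := ENNReal.tsum_mul_left.symm
  _ ≤ ∑' P : G.MM F N τ, ν P := ENNReal.tsum_le_tsum (fun P => (hνP P P.2) ▸ key P P.2)
  _ = ν (⋃₀ G.MM F N τ) := (measure_sUnion_MM ν hmeasMM).symm
  _ = ν (⋃₀ G.SS F N τ) := by rw [sUnion_SS_eq]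
  _ = ∫⁻ x in ⋃₀ G.SS F N τ, F x ∂μ := withDensity_apply F sUnion_SS_measurable

lemma maxN_gt_eq {N : ℕ} {τ : ℝ≥0∞} : {x | τ < G.MaxN F N x} = ⋃₀ G.SS F N τ := by
  ext x
  simp only [Set.mem_setOf_eq, MaxN, lt_iSup_iff, Set.mem_sUnion]
  constructor
  · rintro ⟨⟨Q, hQ⟩, hlt⟩
    by_cases hx : x ∈ Q
    · rw [Set.indicator_of_mem hx] at hlt
      exact ⟨Q, ⟨hQ, hlt⟩, hx⟩
    · rw [Set.indicator_of_notMem hx] at hlt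
      exact absurd hlt (by simp)
  · rintro ⟨Q, ⟨hQ, hτ⟩, hx⟩
    exact ⟨⟨Q, hQ⟩, by rwa [Set.indicator_of_mem hx]⟩

lemma maxN_measurable {N : ℕ} : Measurable (G.MaxN F N) := by
  have : Countable (G.TN N : Set (Set Ω)) :=
    (G.tree_countable.mono TN_subset_tree).to_subtype
  exact Measurable.iSup fun Q =>
    measurable_const.indicator (meas_of_mem_tree (TN_subset_tree Q.2))

end MartingaleGrid

namespace CarlesonAux

open scoped ENNReal
open Set MeasureTheory

lemma meas_lt_set (c : ℝ≥0∞) : MeasurableSet {t : ℝ | ENNReal.ofReal t < c} :=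
  measurableSet_lt ENNReal.measurable_ofReal measurable_const

/-- volume of `{t > 0 : ofReal t < c}` is `c`. -/
lemma vol_layer (c : ℝ≥0∞) : volume (Ioi (0:ℝ) ∩ {t : ℝ | ENNReal.ofReal t < c}) = c := by
  rcases eq_top_or_lt_top c with hc | hc
  · have : Ioi (0:ℝ) ∩ {t : ℝ | ENNReal.ofReal t < c} = Ioi 0 := by
      ext t; simp [hc]
    rw [this, Real.volume_Ioi, hc]
  · have : Ioi (0:ℝ) ∩ {t : ℝ | ENNReal.ofReal t < c} = Ioo 0 c.toReal := by
      ext t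
      simp only [mem_inter_iff, mem_Ioi, mem_setOf_eq, mem_Ioo, and_congr_right_iff]
      intro ht
      rw [ENNReal.ofReal_lt_iff_lt_toReal ht.le hc.ne]
    rw [this, Real.volume_Ioo, sub_zero, ENNReal.ofReal_toReal hc.ne]

/-- volume of `{t > 0 : ofReal (t/2) < c}` is `2c`. -/
lemma vol_layer_half (c : ℝ≥0∞) :
    volume (Ioi (0:ℝ) ∩ {t : ℝ | ENNReal.ofReal (t/2) < c}) = 2 * c := by
  rcases eq_top_or_lt_top c with hc | hc
  · have : Ioi (0:ℝ) ∩ {t : ℝ | ENNReal.ofReal (t/2) < c} = Ioi 0 := by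
      ext t; simp [hc]
    rw [this, Real.volume_Ioi, hc]
    simp
  · have : Ioi (0:ℝ) ∩ {t : ℝ | ENNReal.ofReal (t/2) < c} = Ioo 0 (2 * c.toReal) := by
      ext t
      simp only [mem_inter_iff, mem_Ioi, mem_setOf_eq, mem_Ioo, and_congr_right_iff]
      intro ht
      rw [ENNReal.ofReal_lt_iff_lt_toReal (by linarith) hc.ne]
      constructor <;> intro h <;> linarith
    rw [this, Real.volume_Ioo, sub_zero, ENNReal.ofReal_mul (by norm_num),
      ENNReal.ofReal_toReal hc.ne, ENNReal.ofReal_ofNat]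

lemma lintegral_layer_aux (b : ℝ) (hb : 0 ≤ b) :
    ∫⁻ t in Ioo (0:ℝ) b, ENNReal.ofReal (2 * t) = ENNReal.ofReal (b ^ 2) := by
  have hint : IntegrableOn (fun t : ℝ => 2 * t) (Ioo 0 b) := by
    rw [← integrableOn_Ioc_iff_integrableOn_Ioo]
    have h2 : IntervalIntegrable (fun t : ℝ => 2 * t) volume 0 b :=
      (continuous_const.mul continuous_id).intervalIntegrable 0 b
    exact h2.1
  rw [← ofReal_integral_eq_lintegral_ofReal hint]
  · congr 1
    have h1 : ∫ t in Ioo (0:ℝ) b, 2 * t = ∫ t in (0:ℝ)..b, 2 * t := by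
      rw [intervalIntegral.integral_of_le hb, integral_Ioc_eq_integral_Ioo]
    rw [h1]
    rw [intervalIntegral.integral_const_mul, integral_id]
    ring
  · filter_upwards [self_mem_ae_restrict measurableSet_Ioo] with t ht
    have := ht.1
    dsimp
    linarith

/-- Layer-cake for the square, pointwise version. -/
lemma sq_eq_lintegral (c : ℝ≥0∞) :
    c ^ 2 = ∫⁻ t in Ioi (0:ℝ),
      ({t : ℝ | ENNReal.ofReal t < c}.indicator (fun t => ENNReal.ofReal (2 * t))) t := by
  rw [lintegral_indicator (meas_lt_set c), Measure.restrict_restrict (meas_lt_set c)]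
  rw [Set.inter_comm]
  rcases eq_top_or_lt_top c with hc | hc
  · have hset : Ioi (0:ℝ) ∩ {t : ℝ | ENNReal.ofReal t < c} = Ioi 0 := by
      ext t; simp [hc]
    rw [hset, hc, show ((⊤:ℝ≥0∞) ^ 2) = ⊤ by simp]
    refine (eq_top_iff.2 ?_).symm
    calc (⊤ : ℝ≥0∞) = 2 * volume (Ioi (1:ℝ)) := by rw [Real.volume_Ioi]; simp
    _ = ∫⁻ _ in Ioi (1:ℝ), (2:ℝ≥0∞) := by rw [setLIntegral_const, mul_comm]
    _ ≤ ∫⁻ t in Ioi (1:ℝ), ENNReal.ofReal (2 * t) := by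
        refine setLIntegral_mono (by fun_prop) (fun t ht => ?_)
        rw [show (2:ℝ≥0∞) = ENNReal.ofReal 2 by simp]
        exact ENNReal.ofReal_le_ofReal (by simp at ht; linarith)
    _ ≤ ∫⁻ t in Ioi (0:ℝ), ENNReal.ofReal (2 * t) := by
        apply lintegral_mono_set
        exact Ioi_subset_Ioi (by norm_num)
  · have hset : Ioi (0:ℝ) ∩ {t : ℝ | ENNReal.ofReal t < c} = Ioo 0 c.toReal := by
      ext t
      simp only [mem_inter_iff, mem_Ioi, mem_setOf_eq, mem_Ioo, and_congr_right_iff]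
      intro ht
      rw [ENNReal.ofReal_lt_iff_lt_toReal ht.le hc.ne]
    rw [hset, lintegral_layer_aux c.toReal ENNReal.toReal_nonneg,
      ENNReal.ofReal_pow ENNReal.toReal_nonneg, ENNReal.ofReal_toReal hc.ne]

end CarlesonAux

namespace MartingaleGrid
open scoped ENNReal
open Set MeasureTheory CarlesonAux

variable {Ω : Type*} [MeasurableSpace Ω] {μ : MeasureTheory.Measure Ω}
variable {G : MartingaleGrid Ω μ} {F : Ω → ℝ≥0∞}

lemma avg_le_of_le {c : ℝ≥0∞} (h : ∀ y, F y ≤ c) (Q : Set Ω) : avg μ F Q ≤ c := by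
  apply ENNReal.div_le_of_le_mul
  calc ∫⁻ y in Q, F y ∂μ ≤ ∫⁻ _ in Q, c ∂μ := lintegral_mono h
  _ = c * μ Q := setLIntegral_const Q c

lemma maxN_le {c : ℝ≥0∞} (h : ∀ y, F y ≤ c) {N : ℕ} {x : Ω} : G.MaxN F N x ≤ c := by
  refine iSup_le fun Q => ?_
  by_cases hx : x ∈ (Q : Set Ω)
  · rw [Set.indicator_of_mem hx]; exact avg_le_of_le h _
  · rw [Set.indicator_of_notMem hx]; exact zero_le

lemma maxN_le_add {F₁ F₂ : Ω → ℝ≥0∞} (hF : ∀ x, F x = F₁ x + F₂ x)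
    (h1 : Measurable F₁) {N : ℕ} {x : Ω} :
    G.MaxN F N x ≤ G.MaxN F₁ N x + G.MaxN F₂ N x := by
  refine iSup_le fun Q => ?_
  by_cases hx : x ∈ (Q : Set Ω)
  · rw [Set.indicator_of_mem hx]
    have havg : avg μ F ↑Q = avg μ F₁ ↑Q + avg μ F₂ ↑Q := by
      unfold avg
      rw [lintegral_congr (fun y => hF y), lintegral_add_left h1, ENNReal.add_div]
    have h₁ : avg μ F₁ ↑Q ≤ G.MaxN F₁ N x := by
      have := le_iSup (fun R : ↥(G.TN N) => Set.indicator (R : Set Ω)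
        (fun _ => avg μ F₁ ↑R) x) Q
      rwa [Set.indicator_of_mem hx] at this
    have h₂ : avg μ F₂ ↑Q ≤ G.MaxN F₂ N x := by
      have := le_iSup (fun R : ↥(G.TN N) => Set.indicator (R : Set Ω)
        (fun _ => avg μ F₂ ↑R) x) Q
      rwa [Set.indicator_of_mem hx] at this
    rw [havg]
    exact add_le_add h₁ h₂
  · rw [Set.indicator_of_notMem hx]; exact zero_le

lemma a_le_measure {a : Set Ω → ℝ≥0∞}
    (hC : ∀ P ∈ G.tree, ∑' Q : {Q | Q ∈ G.tree ∧ Q ⊆ P}, a Q.1 ≤ μ P)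
    {Q : Set Ω} (hQ : Q ∈ G.tree) : a Q ≤ μ Q := by
  refine le_trans ?_ (hC Q hQ)
  exact ENNReal.le_tsum (⟨Q, hQ, subset_rfl⟩ : {R | R ∈ G.tree ∧ R ⊆ Q})

lemma sum_SS_le {a : Set Ω → ℝ≥0∞}
    (hC : ∀ P ∈ G.tree, ∑' Q : {Q | Q ∈ G.tree ∧ Q ⊆ P}, a Q.1 ≤ μ P)
    {N : ℕ} {τ : ℝ≥0∞} :
    ∑' Q : ↥(G.SS F N τ), a Q.1 ≤ μ (⋃₀ G.SS F N τ) := by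
  classical
  have hmax : ∀ Q : ↥(G.SS F N τ), ∃ P, P ∈ G.MM F N τ ∧ (Q : Set Ω) ⊆ P := by
    intro Q; obtain ⟨P, hP, hQP⟩ := exists_max Q.2; exact ⟨P, hP, hQP⟩
  choose Pmap hPmem hPsub using hmax
  let i : ↥(G.SS F N τ) → (Σ P : ↥(G.MM F N τ), ↥{Q | Q ∈ G.tree ∧ Q ⊆ (P : Set Ω)}) :=
    fun Q => ⟨⟨Pmap Q, hPmem Q⟩, ⟨Q.1, ⟨SS_subset_tree Q.2, hPsub Q⟩⟩⟩
  have hinj : Function.Injective i := by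
    intro Q₁ Q₂ h
    have h2 : ((i Q₁).2 : Set Ω) = ((i Q₂).2 : Set Ω) := by rw [h]
    exact Subtype.ext h2
  calc ∑' Q : ↥(G.SS F N τ), a Q.1
      ≤ ∑' z : (Σ P : ↥(G.MM F N τ), ↥{Q | Q ∈ G.tree ∧ Q ⊆ (P : Set Ω)}), a z.2.1 :=
        Summable.tsum_le_tsum_of_inj i hinj (fun _ _ => zero_le) (fun Q => le_rfl)
          ENNReal.summable ENNReal.summable
  _ = ∑' P : ↥(G.MM F N τ), ∑' Q : ↥{Q | Q ∈ G.tree ∧ Q ⊆ (P : Set Ω)}, a Q.1 :=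
        ENNReal.tsum_sigma
          (β := fun P : ↥(G.MM F N τ) => ↥{Q | Q ∈ G.tree ∧ Q ⊆ (P : Set Ω)})
          (fun P Q => a Q.1)
  _ ≤ ∑' P : ↥(G.MM F N τ), μ P :=
        ENNReal.tsum_le_tsum fun P => hC P.1 (SS_subset_tree (MM_subset_SS P.2))
  _ = μ (⋃₀ G.MM F N τ) :=
        (measure_sUnion_MM μ (fun P hP => meas_of_mem_tree (SS_subset_tree (MM_subset_SS hP)))).symm
  _ = μ (⋃₀ G.SS F N τ) := by rw [sUnion_SS_eq]

lemma core_swap [SigmaFinite μ] {g w : Ω → ℝ≥0∞} (hg : Measurable g) (hw : Measurable w)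
    {φ : ℝ → ℝ≥0∞} (hφ : Measurable φ) :
    ∫⁻ t in Ioi (0:ℝ), φ t * ∫⁻ x in {y | ENNReal.ofReal t < g y}, w x ∂μ ∂volume
      = ∫⁻ x, w x *
          ∫⁻ t in Ioi (0:ℝ), ({s : ℝ | ENNReal.ofReal s < g x}.indicator φ) t ∂volume ∂μ := by
  have hS : MeasurableSet {p : Ω × ℝ | ENNReal.ofReal p.2 < g p.1} :=
    measurableSet_lt (ENNReal.measurable_ofReal.comp measurable_snd) (hg.comp measurable_fst)
  set H : Ω → ℝ → ℝ≥0∞ := fun x t => {p : Ω × ℝ | ENNReal.ofReal p.2 < g p.1}.indicator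
    (fun p => w p.1 * φ p.2) (x, t) with hH
  have hHmeas : AEMeasurable (Function.uncurry H) (μ.prod (volume.restrict (Ioi 0))) := by
    apply Measurable.aemeasurable
    exact ((hw.comp measurable_fst).mul (hφ.comp measurable_snd)).indicator hS
  have htside : ∀ t, φ t * ∫⁻ x in {y | ENNReal.ofReal t < g y}, w x ∂μ = ∫⁻ x, H x t ∂μ := by
    intro t
    have hBt : MeasurableSet {y | ENNReal.ofReal t < g y} := measurableSet_lt measurable_const hg
    rw [← lintegral_indicator hBt, ← lintegral_const_mul (φ t) (hw.indicator hBt)]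
    refine lintegral_congr fun x => ?_
    by_cases hx : ENNReal.ofReal t < g x
    · rw [Set.indicator_of_mem (show x ∈ {y | ENNReal.ofReal t < g y} from hx)]
      simp only [hH]
      rw [Set.indicator_of_mem (show (x, t) ∈ {p : Ω × ℝ | ENNReal.ofReal p.2 < g p.1} from hx),
        mul_comm]
    · rw [Set.indicator_of_notMem (show x ∉ {y | ENNReal.ofReal t < g y} from hx), mul_zero]
      simp only [hH]
      rw [Set.indicator_of_notMem
          (show (x, t) ∉ {p : Ω × ℝ | ENNReal.ofReal p.2 < g p.1} from hx)]
  have hxside : ∀ x, w x *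
      ∫⁻ t in Ioi (0:ℝ), ({s : ℝ | ENNReal.ofReal s < g x}.indicator φ) t ∂volume
      = ∫⁻ t in Ioi (0:ℝ), H x t ∂volume := by
    intro x
    rw [← lintegral_const_mul (w x) (hφ.indicator (meas_lt_set (g x)))]
    refine lintegral_congr fun t => ?_
    by_cases ht : ENNReal.ofReal t < g x
    · rw [Set.indicator_of_mem (show t ∈ {s : ℝ | ENNReal.ofReal s < g x} from ht)]
      simp only [hH]
      rw [Set.indicator_of_mem (show (x, t) ∈ {p : Ω × ℝ | ENNReal.ofReal p.2 < g p.1} from ht)]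
    · rw [Set.indicator_of_notMem (show t ∉ {s : ℝ | ENNReal.ofReal s < g x} from ht), mul_zero]
      simp only [hH]
      rw [Set.indicator_of_notMem
          (show (x, t) ∉ {p : Ω × ℝ | ENNReal.ofReal p.2 < g p.1} from ht)]
  calc ∫⁻ t in Ioi (0:ℝ), φ t * ∫⁻ x in {y | ENNReal.ofReal t < g y}, w x ∂μ ∂volume
      = ∫⁻ t in Ioi (0:ℝ), ∫⁻ x, H x t ∂μ ∂volume := lintegral_congr fun t => htside t
  _ = ∫⁻ x, ∫⁻ t in Ioi (0:ℝ), H x t ∂volume ∂μ := (lintegral_lintegral_swap hHmeas).symm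
  _ = ∫⁻ x, w x *
        ∫⁻ t in Ioi (0:ℝ), ({s : ℝ | ENNReal.ofReal s < g x}.indicator φ) t ∂volume ∂μ :=
      lintegral_congr fun x => (hxside x).symm

variable (G F) in
noncomputable def JJ (N : ℕ) : ℝ≥0∞ :=
  ∫⁻ t in Ioi (0:ℝ), ENNReal.ofReal (2*t) * μ (⋃₀ G.SS F N (ENNReal.ofReal t)) ∂volume

lemma lintegral_maxN_sq [SigmaFinite μ] {N : ℕ} :
    ∫⁻ x, (G.MaxN F N x) ^ 2 ∂μ = JJ G F N := by
  have hφ : Measurable (fun t : ℝ => ENNReal.ofReal (2*t)) := by fun_prop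
  calc ∫⁻ x, (G.MaxN F N x) ^ 2 ∂μ
      = ∫⁻ x, (1:ℝ≥0∞) * ∫⁻ t in Ioi (0:ℝ),
          ({s : ℝ | ENNReal.ofReal s < G.MaxN F N x}.indicator
            (fun t => ENNReal.ofReal (2*t))) t ∂volume ∂μ := by
        refine lintegral_congr fun x => ?_
        rw [one_mul, ← sq_eq_lintegral]
  _ = ∫⁻ t in Ioi (0:ℝ), (fun t => ENNReal.ofReal (2*t)) t *
        ∫⁻ x in {y | ENNReal.ofReal t < G.MaxN F N y}, (1:ℝ≥0∞) ∂μ ∂volume :=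
      (core_swap maxN_measurable measurable_const hφ).symm
  _ = JJ G F N := by
      refine lintegral_congr fun t => ?_
      rw [setLIntegral_one, maxN_gt_eq]

lemma lintegral_union_F [SigmaFinite μ] (hF : Measurable F) {N : ℕ} :
    ∫⁻ t in Ioi (0:ℝ), ∫⁻ x in ⋃₀ G.SS F N (ENNReal.ofReal t), F x ∂μ ∂volume
      = ∫⁻ x, F x * G.MaxN F N x ∂μ := by
  calc ∫⁻ t in Ioi (0:ℝ), ∫⁻ x in ⋃₀ G.SS F N (ENNReal.ofReal t), F x ∂μ ∂volume
      = ∫⁻ t in Ioi (0:ℝ), (fun _ : ℝ => (1:ℝ≥0∞)) t *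
          ∫⁻ x in {y | ENNReal.ofReal t < G.MaxN F N y}, F x ∂μ ∂volume := by
        refine lintegral_congr fun t => ?_
        rw [one_mul, maxN_gt_eq]
  _ = ∫⁻ x, F x * ∫⁻ t in Ioi (0:ℝ),
        ({s : ℝ | ENNReal.ofReal s < G.MaxN F N x}.indicator (fun _ => (1:ℝ≥0∞))) t
          ∂volume ∂μ := core_swap maxN_measurable hF measurable_const
  _ = ∫⁻ x, F x * G.MaxN F N x ∂μ := by
      refine lintegral_congr fun x => ?_
      congr 1
      rw [lintegral_indicator (meas_lt_set _), setLIntegral_one,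
        Measure.restrict_apply (meas_lt_set _), Set.inter_comm]
      exact vol_layer _

lemma lintegral_split_bound [SigmaFinite μ] (hF : Measurable F) :
    ∫⁻ t in Ioi (0:ℝ), ∫⁻ x in {y | ENNReal.ofReal t < 2 * F y}, F x ∂μ ∂volume
      = 2 * ∫⁻ x, F x ^ 2 ∂μ := by
  calc ∫⁻ t in Ioi (0:ℝ), ∫⁻ x in {y | ENNReal.ofReal t < 2 * F y}, F x ∂μ ∂volume
      = ∫⁻ t in Ioi (0:ℝ), (fun _ : ℝ => (1:ℝ≥0∞)) t *
          ∫⁻ x in {y | ENNReal.ofReal t < (fun z => 2 * F z) y}, F x ∂μ ∂volume := by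
        refine lintegral_congr fun t => ?_; rw [one_mul]
  _ = ∫⁻ x, F x * ∫⁻ t in Ioi (0:ℝ),
        ({s : ℝ | ENNReal.ofReal s < (fun z => 2 * F z) x}.indicator (fun _ => (1:ℝ≥0∞))) t
          ∂volume ∂μ := core_swap (hF.const_mul 2) hF measurable_const
  _ = ∫⁻ x, F x * (2 * F x) ∂μ := by
      refine lintegral_congr fun x => ?_
      congr 1
      rw [lintegral_indicator (meas_lt_set _), setLIntegral_one,
        Measure.restrict_apply (meas_lt_set _), Set.inter_comm]
      exact vol_layer _
  _ = 2 * ∫⁻ x, F x ^ 2 ∂μ := by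
      rw [← lintegral_const_mul 2 (hF.pow_const 2)]
      refine lintegral_congr fun x => ?_
      rw [pow_two]; ring

end MartingaleGrid

namespace MartingaleGrid
open scoped ENNReal
open Set MeasureTheory CarlesonAux

variable {Ω : Type*} [MeasurableSpace Ω] {μ : MeasureTheory.Measure Ω}
variable {G : MartingaleGrid Ω μ} {F : Ω → ℝ≥0∞}

lemma SS_subset_TN {N : ℕ} {τ : ℝ≥0∞} : G.SS F N τ ⊆ G.TN N := fun _ h => h.1

lemma JJ_le_8E [SigmaFinite μ] (hF : Measurable F) {N : ℕ} :
    JJ G F N ≤ 8 * ∫⁻ x, F x ^ 2 ∂μ := by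
  have key : ∀ t ∈ Ioi (0:ℝ),
      ENNReal.ofReal (2*t) * μ (⋃₀ G.SS F N (ENNReal.ofReal t))
        ≤ 4 * ∫⁻ x in {y | ENNReal.ofReal t < 2 * F y}, F x ∂μ := by
    intro t ht
    rw [Set.mem_Ioi] at ht
    set σ := ENNReal.ofReal (t/2) with hσ
    set B := {y | σ < F y} with hB
    have hmeasB : MeasurableSet B := measurableSet_lt measurable_const hF
    set F₁ := B.indicator F with hF₁
    set F₂ := Bᶜ.indicator F with hF₂
    have hsum : ∀ x, F x = F₁ x + F₂ x := by
      intro x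
      rw [hF₁, hF₂]
      by_cases hx : x ∈ B
      · rw [Set.indicator_of_mem hx, Set.indicator_of_notMem (by simpa using hx), add_zero]
      · rw [Set.indicator_of_notMem hx, Set.indicator_of_mem (by simpa using hx), zero_add]
    have hσσ : σ + σ = ENNReal.ofReal t := by
      rw [hσ, ← ENNReal.ofReal_add (by linarith) (by linarith), add_halves]
    have hF2le : ∀ y, F₂ y ≤ σ := by
      intro y
      rw [hF₂]
      by_cases hy : y ∈ Bᶜ
      · rw [Set.indicator_of_mem hy]
        exact not_lt.1 (by simpa [hB] using hy)
      · rw [Set.indicator_of_notMem hy]; exact zero_le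
    have hsub : {x | ENNReal.ofReal t < G.MaxN F N x} ⊆ {x | σ < G.MaxN F₁ N x} := by
      intro x hx
      by_contra h
      rw [Set.mem_setOf_eq, not_lt] at h
      have : G.MaxN F N x ≤ ENNReal.ofReal t := by
        calc G.MaxN F N x ≤ G.MaxN F₁ N x + G.MaxN F₂ N x :=
              maxN_le_add hsum (hF.indicator hmeasB)
        _ ≤ σ + σ := add_le_add h (maxN_le hF2le)
        _ = ENNReal.ofReal t := hσσ
      exact absurd hx (by simpa using this.not_gt)
    have hBeq : B = {y | ENNReal.ofReal t < 2 * F y} := by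
      ext y
      rw [hB, Set.mem_setOf_eq, Set.mem_setOf_eq, ← hσσ, ← two_mul]
      exact (ENNReal.mul_lt_mul_iff_right (by norm_num) (by norm_num)).symm
    have h4σ : ENNReal.ofReal (2*t) = 4 * σ := by
      rw [hσ, show 2*t = 4*(t/2) by ring, ENNReal.ofReal_mul (by norm_num)]
      norm_num
    calc ENNReal.ofReal (2*t) * μ (⋃₀ G.SS F N (ENNReal.ofReal t))
        = 4 * (σ * μ (⋃₀ G.SS F N (ENNReal.ofReal t))) := by rw [h4σ, mul_assoc]
    _ ≤ 4 * (σ * μ (⋃₀ G.SS F₁ N σ)) := by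
        have hμμ : μ (⋃₀ G.SS F N (ENNReal.ofReal t)) ≤ μ (⋃₀ G.SS F₁ N σ) := by
          rw [← maxN_gt_eq, ← maxN_gt_eq]
          exact measure_mono hsub
        exact mul_le_mul_right (mul_le_mul_right hμμ σ) 4
    _ ≤ 4 * ∫⁻ x in ⋃₀ G.SS F₁ N σ, F₁ x ∂μ := by gcongr; exact weak_ineq
    _ ≤ 4 * ∫⁻ x, F₁ x ∂μ := by gcongr; exact Measure.restrict_le_self
    _ = 4 * ∫⁻ x in B, F x ∂μ := by rw [hF₁, lintegral_indicator hmeasB]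
    _ = 4 * ∫⁻ x in {y | ENNReal.ofReal t < 2 * F y}, F x ∂μ := by rw [hBeq]
  calc JJ G F N ≤ ∫⁻ t in Ioi (0:ℝ),
        4 * ∫⁻ x in {y | ENNReal.ofReal t < 2 * F y}, F x ∂μ ∂volume :=
      setLIntegral_mono' measurableSet_Ioi key
  _ = 4 * ∫⁻ t in Ioi (0:ℝ), ∫⁻ x in {y | ENNReal.ofReal t < 2 * F y}, F x ∂μ ∂volume :=
      lintegral_const_mul' 4 _ (by norm_num)
  _ = 4 * (2 * ∫⁻ x, F x ^ 2 ∂μ) := by rw [lintegral_split_bound hF]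
  _ = 8 * ∫⁻ x, F x ^ 2 ∂μ := by rw [← mul_assoc]; norm_num

lemma JJ_le_2FM [SigmaFinite μ] (hF : Measurable F) {N : ℕ} :
    JJ G F N ≤ 2 * ∫⁻ x, F x * G.MaxN F N x ∂μ := by
  have step1 : JJ G F N ≤ ∫⁻ t in Ioi (0:ℝ),
      2 * ∫⁻ x in ⋃₀ G.SS F N (ENNReal.ofReal t), F x ∂μ ∂volume := by
    refine lintegral_mono fun t => ?_
    rw [show (2:ℝ)*t = t*2 by ring, ENNReal.ofReal_mul' (by norm_num), ENNReal.ofReal_ofNat,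
      mul_comm (ENNReal.ofReal t) 2, mul_assoc]
    exact mul_le_mul_right weak_ineq 2
  refine step1.trans (le_of_eq ?_)
  rw [lintegral_const_mul' 2 _ (by norm_num), lintegral_union_F hF]

lemma holder_FM [SigmaFinite μ] (hF : Measurable F) {N : ℕ} :
    ∫⁻ x, F x * G.MaxN F N x ∂μ
      ≤ (∫⁻ x, F x ^ 2 ∂μ) ^ (1/2 : ℝ) * (∫⁻ x, (G.MaxN F N x) ^ 2 ∂μ) ^ (1/2 : ℝ) := by
  have h2 : (2:ℝ).HolderConjugate 2 := by constructor <;> norm_num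
  have H := ENNReal.lintegral_mul_le_Lp_mul_Lq μ h2 hF.aemeasurable
    (maxN_measurable (G := G) (F := F) (N := N)).aemeasurable
  have hpow : ∀ y : ℝ≥0∞, y ^ (2:ℝ) = y ^ (2:ℕ) := fun y => by
    rw [show (2:ℝ) = ((2:ℕ):ℝ) by norm_num, ENNReal.rpow_natCast]
  simp only [Pi.mul_apply, hpow] at H
  exact H

lemma main_N [SigmaFinite μ] (hF : Measurable F) (hE : ∫⁻ x, F x ^ 2 ∂μ ≠ ⊤)
    {a : Set Ω → ℝ≥0∞}
    (hC : ∀ P ∈ G.tree, ∑' Q : {Q | Q ∈ G.tree ∧ Q ⊆ P}, a Q.1 ≤ μ P) (N : ℕ) :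
    ∑' Q : ↥(G.TN N), a Q.1 * (avg μ F Q.1) ^ 2 ≤ 4 * ∫⁻ x, F x ^ 2 ∂μ := by
  set E := ∫⁻ x, F x ^ 2 ∂μ with hEdef
  have hφ : Measurable (fun t : ℝ => ENNReal.ofReal (2*t)) := by fun_prop
  -- Step A : the sum is at most JJ
  have hIJ : ∑' Q : ↥(G.TN N), a Q.1 * (avg μ F Q.1) ^ 2 ≤ JJ G F N := by
    have hper : ∀ Q : ↥(G.TN N), a Q.1 * (avg μ F Q.1) ^ 2
        = ∫⁻ t in Ioi (0:ℝ), a Q.1 *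
            ({s : ℝ | ENNReal.ofReal s < avg μ F Q.1}.indicator
              (fun s => ENNReal.ofReal (2*s))) t ∂volume := by
      intro Q
      rw [sq_eq_lintegral (avg μ F Q.1),
        ← lintegral_const_mul (a Q.1) (hφ.indicator (meas_lt_set _))]
    have hcnt : Countable ↥(G.TN N) := (G.tree_countable.mono TN_subset_tree).to_subtype
    calc ∑' Q : ↥(G.TN N), a Q.1 * (avg μ F Q.1) ^ 2
        = ∫⁻ t in Ioi (0:ℝ), ∑' Q : ↥(G.TN N), a Q.1 *
            ({s : ℝ | ENNReal.ofReal s < avg μ F Q.1}.indicator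
              (fun s => ENNReal.ofReal (2*s))) t ∂volume := by
          rw [lintegral_tsum fun Q : ↥(G.TN N) =>
            ((hφ.indicator (meas_lt_set _)).const_mul (a Q.1)).aemeasurable]
          exact tsum_congr hper
    _ ≤ JJ G F N := by
        refine lintegral_mono fun t => ?_
        have hQeq : ∀ Q : ↥(G.TN N), a Q.1 *
            ({s : ℝ | ENNReal.ofReal s < avg μ F Q.1}.indicator
              (fun s => ENNReal.ofReal (2*s))) t
            = ENNReal.ofReal (2*t) * (G.SS F N (ENNReal.ofReal t)).indicator a Q.1 := by
          intro Q
          by_cases h : ENNReal.ofReal t < avg μ F Q.1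
          · rw [Set.indicator_of_mem (show t ∈ {s : ℝ | ENNReal.ofReal s < avg μ F Q.1} from h),
              Set.indicator_of_mem (show Q.1 ∈ G.SS F N (ENNReal.ofReal t) from ⟨Q.2, h⟩),
              mul_comm]
          · rw [Set.indicator_of_notMem
                (show t ∉ {s : ℝ | ENNReal.ofReal s < avg μ F Q.1} from h), mul_zero,
              Set.indicator_of_notMem (fun hh => h hh.2), mul_zero]
        rw [tsum_congr hQeq, ENNReal.tsum_mul_left]
        gcongr
        calc ∑' Q : ↥(G.TN N), (G.SS F N (ENNReal.ofReal t)).indicator a Q.1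
            = ∑' Q : ↥(G.SS F N (ENNReal.ofReal t)), a Q.1 := by
              rw [tsum_subtype (G.TN N) ((G.SS F N (ENNReal.ofReal t)).indicator a),
                tsum_subtype (G.SS F N (ENNReal.ofReal t)) a, Set.indicator_indicator,
                Set.inter_eq_self_of_subset_right SS_subset_TN]
        _ ≤ μ (⋃₀ G.SS F N (ENNReal.ofReal t)) := sum_SS_le hC
  -- Step B : JJ ≤ 4E
  have hJfin : JJ G F N ≠ ⊤ := by
    refine ne_top_of_le_ne_top ?_ (JJ_le_8E hF)
    exact ENNReal.mul_ne_top (by norm_num) hE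
  have hJ4E : JJ G F N ≤ 4 * E := by
    by_cases hJ0 : JJ G F N = 0
    · rw [hJ0]; exact zero_le
    by_cases hE0 : E = 0
    · exfalso
      apply hJ0
      have h8 : JJ G F N ≤ 8 * E := JJ_le_8E hF
      rw [hE0, mul_zero] at h8
      exact le_antisymm h8 (zero_le)
    set r := JJ G F N ^ (1/2 : ℝ) with hr
    have hr0 : r ≠ 0 := by
      rw [hr]
      simp [ENNReal.rpow_eq_zero_iff, hJ0, hJfin]
    have hrt : r ≠ ⊤ := by
      rw [hr]
      simp [ENNReal.rpow_eq_top_iff, hJ0, hJfin]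
    have hrr : r * r = JJ G F N := by
      rw [hr, ← ENNReal.rpow_add _ _ hJ0 hJfin]
      norm_num
    have hstep : r * r ≤ (2 * E ^ (1/2 : ℝ)) * r := by
      rw [hrr]
      calc JJ G F N ≤ 2 * ∫⁻ x, F x * G.MaxN F N x ∂μ := JJ_le_2FM hF
      _ ≤ 2 * (E ^ (1/2 : ℝ) * (∫⁻ x, (G.MaxN F N x) ^ 2 ∂μ) ^ (1/2 : ℝ)) := by
          gcongr
          exact holder_FM hF
      _ = (2 * E ^ (1/2 : ℝ)) * r := by
          rw [lintegral_maxN_sq, mul_assoc, hr]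
    have hrle : r ≤ 2 * E ^ (1/2 : ℝ) := by
      exact (ENNReal.mul_le_mul_iff_left hr0 hrt).1 hstep
    calc JJ G F N = r * r := hrr.symm
    _ ≤ (2 * E ^ (1/2 : ℝ)) * (2 * E ^ (1/2 : ℝ)) := mul_le_mul' hrle hrle
    _ = 4 * (E ^ (1/2 : ℝ) * E ^ (1/2 : ℝ)) := by ring
    _ = 4 * E := by
        rw [← ENNReal.rpow_add _ _ hE0 hE]
        norm_num
  exact hIJ.trans hJ4E

end MartingaleGrid

end CarlesonAuxSection

open scoped ENNReal
open Set MeasureTheory CarlesonAux MartingaleGrid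

/-- Dyadic Carleson embedding theorem: if the nonnegative coefficients `a_Q`
satisfy `Σ_{Q ⊆ P} a_Q ≤ μ(P)` for every `P ∈ 𝒬`, then
`Σ_Q a_Q ⟨|f|⟩_Q² ≤ 4‖f‖₂²`. -/
theorem carleson_embedding (μ : Measure Ω) [SigmaFinite μ] (G : MartingaleGrid Ω μ)
    (a : Set Ω → ENNReal)
    (hC : ∀ P ∈ G.tree, ∑' Q : {Q | Q ∈ G.tree ∧ Q ⊆ P}, a Q.1 ≤ μ P)
    (f : Ω → ℝ) (hf : MemLp f 2 μ) :
    ∑' Q : G.tree,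
        a Q.1 * ((∫⁻ y in (Q : Set Ω), ENNReal.ofReal |f y| ∂μ) / μ (Q : Set Ω)) ^ 2
      ≤ 4 * eLpNorm f 2 μ ^ 2 := by

  classical
  have hmeas := hf.1
  set g := hmeas.mk f with hgdef
  have hgm : Measurable g := hmeas.stronglyMeasurable_mk.measurable
  have hae : f =ᵐ[μ] g := hmeas.ae_eq_mk
  set F : Ω → ℝ≥0∞ := fun x => ENNReal.ofReal |g x| with hFdef
  have hFm : Measurable F := hgm.abs.ennreal_ofReal
  have haeF : (fun x => ENNReal.ofReal |f x|) =ᵐ[μ] F := by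
    filter_upwards [hae] with x hx
    rw [hFdef]; simp only [hx]
  have havg : ∀ Q : Set Ω,
      (∫⁻ y in Q, ENNReal.ofReal |f y| ∂μ) / μ Q = avg μ F Q := by
    intro Q
    unfold avg
    congr 1
    exact lintegral_congr_ae (ae_restrict_of_ae haeF)
  -- identify the L² norm
  have hE2 : ∫⁻ x, F x ^ 2 ∂μ = eLpNorm f 2 μ ^ 2 := by
    have hp := eLpNorm_eq_lintegral_rpow_enorm_toReal (f := f) (μ := μ) (p := 2)
      (by norm_num) (by norm_num)
    simp only [ENNReal.toReal_ofNat] at hp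
    rw [hp]
    have hXeq : ∫⁻ x, ‖f x‖ₑ ^ (2:ℝ) ∂μ = ∫⁻ x, F x ^ 2 ∂μ := by
      apply lintegral_congr_ae
      filter_upwards [hae] with x hx
      rw [show ‖f x‖ₑ = ENNReal.ofReal |f x| from Real.enorm_eq_ofReal_abs (f x),
        hx, show (2:ℝ) = ((2:ℕ):ℝ) by norm_num, ENNReal.rpow_natCast]
    rw [hXeq, ← ENNReal.rpow_natCast (_ ^ (1/2:ℝ)) 2, ← ENNReal.rpow_mul,
      show (1/2:ℝ) * ((2:ℕ):ℝ) = 1 by norm_num, ENNReal.rpow_one]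
  have hEne : ∫⁻ x, F x ^ 2 ∂μ ≠ ⊤ := by
    rw [hE2]
    exact ENNReal.pow_ne_top hf.2.ne
  -- rewrite the sum
  have hsum_eq : ∑' Q : G.tree,
      a Q.1 * ((∫⁻ y in (Q : Set Ω), ENNReal.ofReal |f y| ∂μ) / μ (Q : Set Ω)) ^ 2
      = ∑' Q : G.tree, a Q.1 * (avg μ F Q.1) ^ 2 :=
    tsum_congr fun Q => by rw [havg]
  rw [hsum_eq, ← hE2]
  -- finset exhaustion
  rw [ENNReal.tsum_eq_iSup_sum]
  refine iSup_le fun s => ?_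
  have hsN : ∃ N : ℕ, ∀ Q ∈ s, (Q : Set Ω) ∈ G.TN N := by
    induction s using Finset.induction_on with
    | empty => exact ⟨0, fun Q hQ => absurd hQ (Finset.notMem_empty Q)⟩
    | @insert R s hR ih =>
      obtain ⟨N₀, hN₀⟩ := ih
      obtain ⟨n, hn⟩ := Set.mem_iUnion.1 R.2
      refine ⟨max N₀ n.natAbs, fun Q hQ => ?_⟩
      rcases Finset.mem_insert.1 hQ with h | h
      · subst h
        refine ⟨n, ?_, hn⟩
        have h1 : n.natAbs ≤ max N₀ n.natAbs := le_max_right _ _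
        omega
      · obtain ⟨m, hm, hQm⟩ := hN₀ Q h
        refine ⟨m, ?_, hQm⟩
        have h1 : N₀ ≤ max N₀ n.natAbs := le_max_left _ _
        omega
  obtain ⟨N, hN⟩ := hsN
  have hfin : ∑ Q ∈ s, a Q.1 * (avg μ F Q.1) ^ 2
      ≤ ∑' Q : ↥(G.TN N), a Q.1 * (avg μ F Q.1) ^ 2 := by
    have h1 : ∑ Q ∈ s, a Q.1 * (avg μ F Q.1) ^ 2
        = ∑' Q : {x // x ∈ s}, a Q.1.1 * (avg μ F Q.1.1) ^ 2 := by
      rw [tsum_fintype]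
      exact (Finset.sum_attach s (fun Q => a Q.1 * (avg μ F Q.1) ^ 2)).symm
    rw [h1]
    exact Summable.tsum_le_tsum_of_inj (fun Q => (⟨Q.1.1, hN Q.1 Q.2⟩ : ↥(G.TN N)))
      (fun Q₁ Q₂ h => by
        simp only [Subtype.mk.injEq] at h
        exact Subtype.ext (Subtype.ext h))
      (fun _ _ => zero_le) (fun Q => le_rfl) ENNReal.summable ENNReal.summable
  exact hfin.trans (main_N hFm hEne hC N)
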